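/- Let X'₁,…,X'_n be i.i.d. uniform on [0,1], and let X₁ ≤ … ≤ X_n be their order statistics. Then for any 1 ≤ k < l ≤ n and h > 0 and any u > 0: P[X_l - X_k > h] ≤ n · exp(-nh(1 - e^{-u}) + u(l-k)). -/

import Mathlib

open MeasureTheory ProbabilityTheory
open scoped ENNReal ProbabilityTheory

open Finset

lemma gap_sum_powerset {ι : Type*} [DecidableEq ι] (s : Finset ι) (p q : ℝ≥0∞) :
    ∑ T ∈ s.powerset, p ^ T.card * q ^ (s.card - T.card) = (p + q) ^ s.card := by
  rw [← Finset.prod_const, Finset.prod_add]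
  refine Finset.sum_congr rfl fun T hT => ?_
  rw [Finset.prod_const, Finset.prod_const, Finset.card_sdiff_of_subset (Finset.mem_powerset.mp hT)]

lemma gap_pattern {Ω : Type*} [MeasureSpace Ω] [IsProbabilityMeasure (ℙ : Measure Ω)]
    {n : ℕ} (X' : Fin n → Ω → ℝ)
    (hmeas : ∀ i, Measurable (X' i))
    (hindep : iIndepFun X' ℙ)
    (hunif : ∀ i, Measure.map (X' i) ℙ = volume.restrict (Set.Icc (0 : ℝ) 1))
    (i : Fin n) (t ε a b : ℝ) (h0a : 0 ≤ a) (hb1 : b ≤ 1) (hab : a ≤ b)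
    (m : ℕ) (u : ℝ) (hu : 0 < u) :
    ℙ ((X' i ⁻¹' Set.Ico t (t+ε)) ∩
        {ω | ((Finset.univ.erase i).filter (fun j => X' j ω ∈ Set.Ioc a b)).card ≤ m})
      ≤ (volume.restrict (Set.Icc (0:ℝ) 1)) (Set.Ico t (t+ε)) *
          (ENNReal.ofReal (Real.exp (u*m)) *
            ENNReal.ofReal (1 - (b-a)*(1-Real.exp (-u))) ^ (n-1)) := by
  classical
  set μ : Measure ℝ := volume.restrict (Set.Icc (0:ℝ) 1) with hμdef
  have hμprob : IsProbabilityMeasure μ := by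
    constructor
    rw [hμdef, Measure.restrict_apply_univ, Real.volume_Icc]
    norm_num
  set I : Set ℝ := Set.Ioc a b with hIdef
  have hImeas : MeasurableSet I := measurableSet_Ioc
  have hIμ : μ I = ENNReal.ofReal (b - a) := by
    rw [hμdef, Measure.restrict_apply hImeas, Set.inter_eq_left.mpr ?_, Real.volume_Ioc]
    exact fun x hx => ⟨le_trans h0a (le_of_lt hx.1), le_trans hx.2 hb1⟩
  have hba0 : 0 ≤ b - a := by linarith
  have hba1 : b - a ≤ 1 := by linarith
  have hIcμ : μ Iᶜ = ENNReal.ofReal (1 - (b - a)) := by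
    rw [measure_compl hImeas (measure_ne_top _ _), hIμ, measure_univ,
      ENNReal.ofReal_sub _ hba0, ENNReal.ofReal_one]
  -- the covering by patterns
  set cell : Set ℝ := Set.Ico t (t+ε) with hcelldef
  have hcellmeas : MeasurableSet cell := measurableSet_Ico
  set s : Finset (Fin n) := Finset.univ.erase i with hsdef
  have hscard : s.card = n - 1 := by
    rw [hsdef, Finset.card_erase_of_mem (Finset.mem_univ i), Finset.card_univ, Fintype.card_fin]
  set B : Finset (Fin n) → Fin n → Set ℝ :=
    fun T j => if j = i then cell else if j ∈ T then I else Iᶜ with hBdef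
  have hBmeas : ∀ T j, MeasurableSet (B T j) := by
    intro T j
    rw [hBdef]
    dsimp only
    split_ifs
    · exact hcellmeas
    · exact hImeas
    · exact hImeas.compl
  have hcover : (X' i ⁻¹' cell) ∩
      {ω | ((Finset.univ.erase i).filter (fun j => X' j ω ∈ I)).card ≤ m}
      ⊆ ⋃ T ∈ s.powerset.filter (fun T => T.card ≤ m), ⋂ j, X' j ⁻¹' (B T j) := by
    intro ω hω
    refine Set.mem_biUnion (Finset.mem_filter.mpr ⟨Finset.mem_powerset.mpr (Finset.filter_subset _ _), hω.2⟩) ?_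
    refine Set.mem_iInter.mpr fun j => ?_
    rw [Set.mem_preimage, hBdef]
    dsimp only
    split_ifs with hji hjT
    · exact hji ▸ hω.1
    · exact (Finset.mem_filter.mp hjT).2
    · intro hmem
      exact hjT (Finset.mem_filter.mpr ⟨Finset.mem_erase.mpr ⟨hji, Finset.mem_univ j⟩, hmem⟩)
  have hpattern : ∀ T ∈ s.powerset,
      ℙ (⋂ j, X' j ⁻¹' (B T j)) =
        μ cell * (ENNReal.ofReal (b-a) ^ T.card *
          ENNReal.ofReal (1-(b-a)) ^ (s.card - T.card)) := by
    intro T hT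
    have hTs : T ⊆ s := Finset.mem_powerset.mp hT
    rw [hindep.meas_iInter (fun j => ⟨B T j, hBmeas T j, rfl⟩)]
    have hval : ∀ j, ℙ (X' j ⁻¹' (B T j)) = μ (B T j) := by
      intro j
      rw [← hunif j, Measure.map_apply (hmeas j) (hBmeas T j)]
    simp_rw [hval]
    rw [← Finset.mul_prod_erase Finset.univ _ (Finset.mem_univ i), ← hsdef]
    have : ∀ j ∈ s, μ (B T j) = if j ∈ T then ENNReal.ofReal (b-a) else ENNReal.ofReal (1-(b-a)) := by
      intro j hj
      have hji : j ≠ i := (Finset.mem_erase.mp hj).1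
      rw [hBdef]
      dsimp only
      rw [if_neg hji]
      split_ifs
      · exact hIμ
      · exact hIcμ
    rw [Finset.prod_congr rfl this, Finset.prod_ite, Finset.prod_const, Finset.prod_const,
      Finset.filter_mem_eq_inter, Finset.inter_eq_right.mpr hTs, ← Finset.sdiff_eq_filter,
      Finset.card_sdiff_of_subset hTs]
    congr 1
    rw [hBdef]
    dsimp only
    rw [if_pos rfl]
  -- the per-term Chernoff-type bound
  have hterm : ∀ T ∈ s.powerset.filter (fun T => T.card ≤ m),
      ENNReal.ofReal (b-a) ^ T.card * ENNReal.ofReal (1-(b-a)) ^ (s.card - T.card)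
        ≤ ENNReal.ofReal (Real.exp (u*m)) *
          (ENNReal.ofReal (Real.exp (-u) * (b-a)) ^ T.card *
            ENNReal.ofReal (1-(b-a)) ^ (s.card - T.card)) := by
    intro T hT
    have hTm : T.card ≤ m := (Finset.mem_filter.mp hT).2
    have hTmR : (T.card : ℝ) ≤ (m : ℝ) := Nat.cast_le.mpr hTm
    have h1 : (1:ℝ≥0∞) ≤ ENNReal.ofReal (Real.exp (u*m)) * ENNReal.ofReal (Real.exp (-u)) ^ T.card := by
      rw [← ENNReal.ofReal_pow (Real.exp_nonneg _), ← ENNReal.ofReal_mul (Real.exp_nonneg _),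
        ← Real.exp_nat_mul, ← Real.exp_add]
      refine ENNReal.one_le_ofReal.mpr (Real.one_le_exp ?_)
      nlinarith [hu.le]
    have key : ENNReal.ofReal (b-a) ^ T.card
        ≤ ENNReal.ofReal (Real.exp (u*m)) * ENNReal.ofReal (Real.exp (-u) * (b-a)) ^ T.card := by
      calc ENNReal.ofReal (b-a) ^ T.card = 1 * ENNReal.ofReal (b-a) ^ T.card := (one_mul _).symm
        _ ≤ (ENNReal.ofReal (Real.exp (u*m)) * ENNReal.ofReal (Real.exp (-u)) ^ T.card) *
              ENNReal.ofReal (b-a) ^ T.card := mul_le_mul_left h1 _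
        _ = _ := by rw [ENNReal.ofReal_mul (Real.exp_nonneg _), mul_pow]; ring
    calc ENNReal.ofReal (b-a) ^ T.card * ENNReal.ofReal (1-(b-a)) ^ (s.card - T.card)
        ≤ (ENNReal.ofReal (Real.exp (u*m)) * ENNReal.ofReal (Real.exp (-u) * (b-a)) ^ T.card) *
            ENNReal.ofReal (1-(b-a)) ^ (s.card - T.card) := by
          exact mul_le_mul_left key _
      _ = _ := by ring
  calc ℙ ((X' i ⁻¹' cell) ∩ {ω | ((Finset.univ.erase i).filter (fun j => X' j ω ∈ I)).card ≤ m})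
      ≤ ℙ (⋃ T ∈ s.powerset.filter (fun T => T.card ≤ m), ⋂ j, X' j ⁻¹' (B T j)) :=
        measure_mono hcover
    _ ≤ ∑ T ∈ s.powerset.filter (fun T => T.card ≤ m), ℙ (⋂ j, X' j ⁻¹' (B T j)) :=
        measure_biUnion_finset_le _ _
    _ = ∑ T ∈ s.powerset.filter (fun T => T.card ≤ m),
          μ cell * (ENNReal.ofReal (b-a) ^ T.card *
            ENNReal.ofReal (1-(b-a)) ^ (s.card - T.card)) := by
        refine Finset.sum_congr rfl fun T hT => hpattern T (Finset.mem_filter.mp hT).1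
    _ ≤ ∑ T ∈ s.powerset.filter (fun T => T.card ≤ m),
          μ cell * (ENNReal.ofReal (Real.exp (u*m)) *
            (ENNReal.ofReal (Real.exp (-u) * (b-a)) ^ T.card *
              ENNReal.ofReal (1-(b-a)) ^ (s.card - T.card))) := by
        refine Finset.sum_le_sum fun T hT => mul_le_mul_right (hterm T hT) _
    _ ≤ ∑ T ∈ s.powerset,
          μ cell * (ENNReal.ofReal (Real.exp (u*m)) *
            (ENNReal.ofReal (Real.exp (-u) * (b-a)) ^ T.card *
              ENNReal.ofReal (1-(b-a)) ^ (s.card - T.card))) := by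
        refine Finset.sum_le_sum_of_subset (Finset.filter_subset _ _)
    _ = μ cell * (ENNReal.ofReal (Real.exp (u*m)) *
          ∑ T ∈ s.powerset, ENNReal.ofReal (Real.exp (-u) * (b-a)) ^ T.card *
            ENNReal.ofReal (1-(b-a)) ^ (s.card - T.card)) := by
        simp only [Finset.mul_sum]
    _ = _ := by
        rw [gap_sum_powerset, ← ENNReal.ofReal_add (by positivity) (by linarith),
          hscard]
        congr 3
        ring


/-- For order statistics `X₁ ≤ … ≤ X_n` of an i.i.d. uniform sample on `[0,1]`,
for `1 ≤ k < l ≤ n`, `h > 0`, `u > 0`: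
`P[X_l - X_k > h] ≤ n exp(-nh(1 - e^{-u}) + u(l - k))`. -/
theorem order_statistics_gap_tail
    {Ω : Type*} [MeasureSpace Ω] [IsProbabilityMeasure (ℙ : Measure Ω)]
    (n : ℕ) (X' X : Fin n → Ω → ℝ)
    (hmeas : ∀ i, Measurable (X' i))
    (hindep : iIndepFun X' ℙ)
    (hunif : ∀ i, Measure.map (X' i) ℙ = volume.restrict (Set.Icc (0 : ℝ) 1))
    (hmono : ∀ ω, Monotone fun i => X i ω)
    (hperm : ∀ ω, ∃ π : Equiv.Perm (Fin n), ∀ i, X i ω = X' (π i) ω)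
    (k l : Fin n) (hkl : k < l) (h u : ℝ) (hh : 0 < h) (hu : 0 < u) :
    ℙ {ω | h < X l ω - X k ω}
      ≤ ENNReal.ofReal ((n : ℝ) *
          Real.exp (-(n : ℝ) * h * (1 - Real.exp (-u)) + u * (((l : ℕ) : ℝ) - ((k : ℕ) : ℝ)))) := by
  classical
  have hn : 0 < n := k.pos
  set E : Set Ω := {ω | h < X l ω - X k ω} with hEdef
  set good : Set Ω := {ω | ∀ j, X' j ω ∈ Set.Icc (0:ℝ) 1} with hgooddef
  have hbad : ℙ goodᶜ = 0 := by
    have hsub : goodᶜ ⊆ ⋃ j, X' j ⁻¹' (Set.Icc (0:ℝ) 1)ᶜ := by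
      intro ω hω
      rw [hgooddef] at hω
      simp only [Set.mem_compl_iff, Set.mem_setOf_eq, not_forall] at hω
      obtain ⟨j, hj⟩ := hω
      exact Set.mem_iUnion.mpr ⟨j, hj⟩
    refine measure_mono_null hsub (measure_iUnion_null fun j => ?_)
    have : ℙ (X' j ⁻¹' (Set.Icc (0:ℝ) 1)ᶜ) = (Measure.map (X' j) ℙ) (Set.Icc (0:ℝ) 1)ᶜ :=
      (Measure.map_apply (hmeas j) measurableSet_Icc.compl).symm
    rw [this, hunif j, Measure.restrict_apply measurableSet_Icc.compl]
    simp
  have hgoodX : ∀ ω ∈ good, ∀ r : Fin n, X r ω ∈ Set.Icc (0:ℝ) 1 := by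
    intro ω hω r
    obtain ⟨π, hπ⟩ := hperm ω
    rw [hπ r]; exact hω _
  by_cases h1 : 1 ≤ h
  · have hEsub : E ⊆ goodᶜ := by
      intro ω hω
      intro hgood
      have h0 := (hgoodX ω hgood k).1
      have h1' := (hgoodX ω hgood l).2
      rw [hEdef] at hω
      simp only [Set.mem_setOf_eq] at hω
      linarith
    calc ℙ E ≤ ℙ goodᶜ := measure_mono hEsub
      _ = 0 := hbad
      _ ≤ _ := by simp
  push_neg at h1
  set c : ℝ := 1 - Real.exp (-u) with hcdef
  have hc0 : 0 < c := by
    have := Real.exp_lt_one_iff.mpr (neg_lt_zero.mpr hu)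
    rw [hcdef]; linarith
  have hc1 : c < 1 := by
    have := Real.exp_pos (-u)
    rw [hcdef]; linarith
  have hcu : c ≤ u := by
    have := Real.add_one_le_exp (-u)
    rw [hcdef]; linarith
  set m : ℕ := (l:ℕ) - (k:ℕ) - 1 with hmdef
  have hklN : (k:ℕ) < (l:ℕ) := hkl
  -- KEY: discretized bound
  have key : ∀ ε : ℝ, 0 < ε → ε < h →
      ℙ E ≤ ENNReal.ofReal ((n:ℝ) * (Real.exp (u*m) * (1-(h-ε)*c)^(n-1))) := by
    intro ε hε hεh
    set N : ℕ := ⌈(1-h)/ε⌉₊ with hNdef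
    set G : Fin n → ℕ → Set Ω := fun i q =>
      (X' i ⁻¹' Set.Ico (q*ε) (q*ε+ε)) ∩
        {ω | ((Finset.univ.erase i).filter
          (fun j => X' j ω ∈ Set.Ioc (q*ε+ε) (q*ε+h))).card ≤ m} with hGdef
    have hcover : E ∩ good ⊆ ⋃ i : Fin n, ⋃ q ∈ Finset.range N, G i q := by
      intro ω hω
      obtain ⟨π, hπ⟩ := hperm ω
      have hE : h < X l ω - X k ω := hω.1
      have hx0 : 0 ≤ X k ω := (hgoodX ω hω.2 k).1
      have hxl1 : X l ω ≤ 1 := (hgoodX ω hω.2 l).2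
      set x : ℝ := X k ω with hxdef
      have hxlt : x < 1 - h := by rw [hxdef]; linarith
      set q : ℕ := ⌊x/ε⌋₊ with hqdef
      have hq1 : (q:ℝ)*ε ≤ x := by
        rw [hqdef]
        have := Nat.floor_le (div_nonneg hx0 hε.le)
        calc (⌊x/ε⌋₊:ℝ)*ε ≤ (x/ε)*ε := by nlinarith
          _ = x := by field_simp
      have hq2 : x < (q:ℝ)*ε+ε := by
        have := Nat.lt_floor_add_one (x/ε)
        have h2 : x/ε < (q:ℝ)+1 := by rw [hqdef]; push_cast; linarith
        calc x = (x/ε)*ε := by field_simp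
          _ < ((q:ℝ)+1)*ε := by nlinarith
          _ = (q:ℝ)*ε+ε := by ring
      have hqN : q ∈ Finset.range N := by
        rw [Finset.mem_range, hNdef]
        refine Nat.lt_ceil.mpr ?_
        calc (q:ℝ) ≤ x/ε := Nat.floor_le (div_nonneg hx0 hε.le)
          _ < (1-h)/ε := by gcongr
      refine Set.mem_iUnion.mpr ⟨π k, Set.mem_biUnion hqN ?_⟩
      rw [hGdef]
      constructor
      · rw [Set.mem_preimage, ← hπ k]
        exact ⟨hq1, hq2⟩
      · simp only [Set.mem_setOf_eq]
        rw [hmdef, ← Fin.card_Ioo k l]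
        refine Finset.card_le_card_of_injOn (fun j => π.symm j) ?_
          (fun a _ b _ hab => π.symm.injective hab)
        intro j hj
        rw [Finset.mem_coe, Finset.mem_filter] at hj
        have hXj : X (π.symm j) ω = X' j ω := by rw [hπ (π.symm j), Equiv.apply_symm_apply]
        have hmem := hj.2
        rw [Finset.mem_coe, Finset.mem_Ioo]
        constructor
        · by_contra hle
          push_neg at hle
          have := hmono ω hle
          simp only at this
          have : X (π.symm j) ω ≤ x := this
          have := hmem.1
          linarith
        · by_contra hle
          push_neg at hle
          have := hmono ω hle
          simp only at this
          have hXl : X l ω ≤ X (π.symm j) ω := this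
          have := hmem.2
          have hqx : (q:ℝ)*ε + h ≤ x + h := by linarith
          rw [hXj] at hXl
          linarith
    set K : ℝ≥0∞ := ENNReal.ofReal (Real.exp (u*m)) * ENNReal.ofReal (1-(h-ε)*c) ^ (n-1)
      with hKdef
    have hB0 : (0:ℝ) ≤ 1-(h-ε)*c := by
      nlinarith [mul_nonneg (by linarith : (0:ℝ) ≤ h-ε) hc0.le,
        mul_nonneg (by linarith : (0:ℝ) ≤ 1-(h-ε)) hc0.le]
    have hGbound : ∀ i : Fin n, ∀ q ∈ Finset.range N,
        ℙ (G i q) ≤ (volume.restrict (Set.Icc (0:ℝ) 1))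
            (Set.Ico ((q:ℝ)*ε) ((q:ℝ)*ε+ε)) * K := by
      intro i q hq
      have hq1 : (q:ℝ)*ε < 1-h := by
        rw [Finset.mem_range, hNdef] at hq
        have hqlt := Nat.lt_ceil.mp hq
        calc (q:ℝ)*ε < ((1-h)/ε)*ε := by nlinarith
          _ = 1-h := by field_simp
      have hb := gap_pattern X' hmeas hindep hunif i ((q:ℝ)*ε) ε ((q:ℝ)*ε+ε) ((q:ℝ)*ε+h)
        (by positivity) (by linarith) (by linarith) m u hu
      have harith : ((q:ℝ)*ε+h) - ((q:ℝ)*ε+ε) = h - ε := by ring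
      rw [harith] at hb
      exact hb
    have hcells : ∑ q ∈ Finset.range N,
        (volume.restrict (Set.Icc (0:ℝ) 1)) (Set.Ico ((q:ℝ)*ε) ((q:ℝ)*ε+ε)) ≤ 1 := by
      rw [← measure_biUnion_finset ?_ (fun q _ => measurableSet_Ico)]
      · calc (volume.restrict (Set.Icc (0:ℝ) 1)) (⋃ q ∈ Finset.range N,
              Set.Ico ((q:ℝ)*ε) ((q:ℝ)*ε+ε))
            ≤ (volume.restrict (Set.Icc (0:ℝ) 1)) Set.univ := measure_mono (Set.subset_univ _)
          _ = 1 := by rw [Measure.restrict_apply_univ, Real.volume_Icc]; norm_num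
      · intro q1 _ q2 _ hne
        have hdisj : ∀ a b : ℕ, a < b → Disjoint (Set.Ico ((a:ℝ)*ε) ((a:ℝ)*ε+ε))
            (Set.Ico ((b:ℝ)*ε) ((b:ℝ)*ε+ε)) := by
          intro a b hab
          have hab' : (a:ℝ)+1 ≤ (b:ℝ) := by exact_mod_cast hab
          refine Set.Ico_disjoint_Ico.mpr ?_
          refine le_trans (min_le_left _ _) (le_trans ?_ (le_max_right _ _))
          nlinarith
        rcases Ne.lt_or_gt hne with hlt | hlt
        · exact hdisj q1 q2 hlt
        · exact (hdisj q2 q1 hlt).symm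
    calc ℙ E ≤ ℙ ((E ∩ good) ∪ goodᶜ) := measure_mono (fun ω hω => by
            by_cases hg : ω ∈ good
            · exact Or.inl ⟨hω, hg⟩
            · exact Or.inr hg)
      _ ≤ ℙ (E ∩ good) + ℙ goodᶜ := measure_union_le _ _
      _ = ℙ (E ∩ good) := by rw [hbad, add_zero]
      _ ≤ ℙ (⋃ i : Fin n, ⋃ q ∈ Finset.range N, G i q) := measure_mono hcover
      _ ≤ ∑ i : Fin n, ℙ (⋃ q ∈ Finset.range N, G i q) := measure_iUnion_fintype_le _ _
      _ ≤ ∑ i : Fin n, ∑ q ∈ Finset.range N, ℙ (G i q) :=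
          Finset.sum_le_sum (fun i _ => measure_biUnion_finset_le _ _)
      _ ≤ ∑ i : Fin n, ∑ q ∈ Finset.range N,
            (volume.restrict (Set.Icc (0:ℝ) 1)) (Set.Ico ((q:ℝ)*ε) ((q:ℝ)*ε+ε)) * K :=
          Finset.sum_le_sum fun i _ => Finset.sum_le_sum fun q hq => hGbound i q hq
      _ = ∑ _i : Fin n, (∑ q ∈ Finset.range N,
            (volume.restrict (Set.Icc (0:ℝ) 1)) (Set.Ico ((q:ℝ)*ε) ((q:ℝ)*ε+ε))) * K := by
          simp [Finset.sum_mul]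
      _ ≤ ∑ _i : Fin n, 1 * K := Finset.sum_le_sum fun i _ => mul_le_mul_left hcells _
      _ = (n : ℝ≥0∞) * K := by
          simp only [one_mul, Finset.sum_const, Finset.card_univ, Fintype.card_fin,
            nsmul_eq_mul]
      _ = ENNReal.ofReal ((n:ℝ) * (Real.exp (u*m) * (1-(h-ε)*c)^(n-1))) := by
          rw [hKdef, ← ENNReal.ofReal_pow hB0, ← ENNReal.ofReal_mul (Real.exp_nonneg _),
            ← ENNReal.ofReal_natCast n, ← ENNReal.ofReal_mul (Nat.cast_nonneg n)]
  -- take the limit ε → 0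
  have hlim : ℙ E ≤ ENNReal.ofReal ((n:ℝ) * (Real.exp (u*m) * (1-h*c)^(n-1))) := by
    have hseq : ∀ j : ℕ, ℙ E ≤
        ENNReal.ofReal ((n:ℝ) * (Real.exp (u*m) * (1-(h - h/((j:ℝ)+2))*c)^(n-1))) := by
      intro j
      refine key (h/((j:ℝ)+2)) (by positivity) ?_
      rw [div_lt_iff₀ (by positivity)]
      nlinarith [Nat.cast_nonneg (α := ℝ) j]
    have htt : Filter.Tendsto
        (fun j : ℕ => ENNReal.ofReal ((n:ℝ) * (Real.exp (u*m) * (1-(h - h/((j:ℝ)+2))*c)^(n-1))))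
        Filter.atTop (nhds (ENNReal.ofReal ((n:ℝ) * (Real.exp (u*m) * (1-h*c)^(n-1))))) := by
      refine (ENNReal.continuous_ofReal.tendsto _).comp ?_
      have h0 : Filter.Tendsto (fun j : ℕ => h/((j:ℝ)+2)) Filter.atTop (nhds 0) :=
        Filter.Tendsto.div_atTop tendsto_const_nhds
          (Filter.tendsto_atTop_add_const_right _ 2 tendsto_natCast_atTop_atTop)
      have h1' : Filter.Tendsto (fun j : ℕ => 1-(h - h/((j:ℝ)+2))*c) Filter.atTop
          (nhds (1-h*c)) := by
        have h2 := (tendsto_const_nhds (x := h) (f := Filter.atTop (α := ℕ))).sub h0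
        rw [sub_zero] at h2
        exact (tendsto_const_nhds (x := (1:ℝ))).sub (h2.mul_const c)
      exact tendsto_const_nhds.mul (tendsto_const_nhds.mul (h1'.pow (n-1)))
    exact ge_of_tendsto' htt hseq
  refine hlim.trans (ENNReal.ofReal_le_ofReal ?_)
  have hmcast : (m:ℝ) = ((l:ℕ):ℝ) - ((k:ℕ):ℝ) - 1 := by
    rw [hmdef, Nat.cast_sub (by omega), Nat.cast_sub (by omega), Nat.cast_one]
  have hn1 : ((n-1:ℕ):ℝ) = (n:ℝ) - 1 := by
    rw [Nat.cast_sub hn, Nat.cast_one]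
  have hhc1 : h*c ≤ c := mul_le_of_le_one_left hc0.le h1.le
  have hB0' : (0:ℝ) ≤ 1 - h*c := by nlinarith
  refine mul_le_mul_of_nonneg_left ?_ (Nat.cast_nonneg n)
  have hBe : (1-h*c)^(n-1) ≤ Real.exp (-(h*c))^(n-1) :=
    pow_le_pow_left₀ hB0' (by nlinarith [Real.add_one_le_exp (-(h*c))]) _
  calc Real.exp (u*m) * (1-h*c)^(n-1) ≤ Real.exp (u*m) * Real.exp (-(h*c))^(n-1) :=
        mul_le_mul_of_nonneg_left hBe (Real.exp_nonneg _)
    _ = Real.exp (u*(m:ℝ) + ((n-1:ℕ):ℝ)*(-(h*c))) := by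
        rw [← Real.exp_nat_mul, ← Real.exp_add]
    _ ≤ Real.exp (-(n:ℝ)*h*c + u*(((l:ℕ):ℝ) - ((k:ℕ):ℝ))) := by
        refine Real.exp_le_exp.mpr ?_
        rw [hmcast, hn1]
        nlinarith
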